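/- Let (Γ, G) ∈ OG(4), i.e. Γ is connected, 4-valent and G-oriented. Then the stabilizer in G of any vertex of Γ is a 2-group. -/

import Mathlib

theorem stmt_3 {V : Type*} [Fintype V] (Γ : SimpleGraph V) [DecidableRel Γ.Adj]
    (hconn : Γ.Connected) (hval : ∀ v : V, Γ.degree v = 4)
    (G : Subgroup (Equiv.Perm V))
    (hAut : ∀ g ∈ G, ∀ u v : V, Γ.Adj (g u) (g v) ↔ Γ.Adj u v)
    (hVT : ∀ u v : V, ∃ g ∈ G, g u = v)
    (hET : ∀ a b c d : V, Γ.Adj a b → Γ.Adj c d →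
      ∃ g ∈ G, (g a = c ∧ g b = d) ∨ (g a = d ∧ g b = c))
    (hnAT : ¬ ∀ a b c d : V, Γ.Adj a b → Γ.Adj c d → ∃ g ∈ G, g a = c ∧ g b = d)
    (v : V) :
    IsPGroup 2 ↥(G ⊓ MulAction.stabilizer (Equiv.Perm V) v) := by
  classical
  -- a base arc (v, b₀)
  obtain ⟨b₀, hb₀⟩ : ∃ b, Γ.Adj v b := by
    have h0 : 0 < Γ.degree v := by rw [hval]; norm_num
    rw [← SimpleGraph.card_neighborFinset_eq_degree] at h0
    obtain ⟨b, hb⟩ := Finset.card_pos.mp h0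
    exact ⟨b, (SimpleGraph.mem_neighborFinset Γ v b).mp hb⟩
  -- the orientation: orbit of the base arc
  set D : V → V → Prop := fun x y => ∃ g ∈ G, g v = x ∧ g b₀ = y with hDdef
  have hD_adj : ∀ x y, D x y → Γ.Adj x y := by
    rintro x y ⟨g, hg, rfl, rfl⟩
    exact (hAut g hg v b₀).mpr hb₀
  have hD_inv : ∀ g ∈ G, ∀ x y, D x y → D (g x) (g y) := by
    rintro g hg x y ⟨k, hk, rfl, rfl⟩
    exact ⟨g * k, mul_mem hg hk, rfl, rfl⟩
  have hD_total : ∀ x y, Γ.Adj x y → D x y ∨ D y x := by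
    intro x y hxy
    obtain ⟨g, hg, hc | hc⟩ := hET v b₀ x y hb₀ hxy
    · exact Or.inl ⟨g, hg, hc.1, hc.2⟩
    · exact Or.inr ⟨g, hg, hc.1, hc.2⟩
  have hD_anti : ∀ x y, D x y → ¬ D y x := by
    rintro x y ⟨g₁, hg₁, hg₁a, hg₁b⟩ ⟨g₂, hg₂, hg₂a, hg₂b⟩
    have hsG : g₁⁻¹ * g₂ ∈ G := mul_mem (inv_mem hg₁) hg₂
    have hsa : g₁⁻¹ (g₂ v) = b₀ := by
      rw [hg₂a, ← hg₁b, Equiv.Perm.inv_eq_iff_eq.mpr rfl]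
    have hsb : g₁⁻¹ (g₂ b₀) = v := by
      rw [hg₂b, ← hg₁a, Equiv.Perm.inv_eq_iff_eq.mpr rfl]
    apply hnAT
    intro c d e f hcd hef
    obtain ⟨t, ht, htc⟩ := hET v b₀ c d hb₀ hcd
    have hw : ∃ w ∈ G, w c = d ∧ w d = c := by
      refine ⟨t * (g₁⁻¹ * g₂) * t⁻¹, mul_mem (mul_mem ht hsG) (inv_mem ht), ?_, ?_⟩
      · rcases htc with ⟨h1, h2⟩ | ⟨h1, h2⟩
        · simp only [Equiv.Perm.mul_apply]
          rw [← h1, Equiv.Perm.inv_eq_iff_eq.mpr rfl, hsa, h2]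
        · simp only [Equiv.Perm.mul_apply]
          rw [← h2, Equiv.Perm.inv_eq_iff_eq.mpr rfl, hsb, h1]
      · rcases htc with ⟨h1, h2⟩ | ⟨h1, h2⟩
        · simp only [Equiv.Perm.mul_apply]
          rw [← h2, Equiv.Perm.inv_eq_iff_eq.mpr rfl, hsb, h1]
        · simp only [Equiv.Perm.mul_apply]
          rw [← h1, Equiv.Perm.inv_eq_iff_eq.mpr rfl, hsa, h2]
    obtain ⟨w, hwG, hwc, hwd⟩ := hw
    obtain ⟨k, hk, hkc⟩ := hET c d e f hcd hef
    rcases hkc with ⟨h1, h2⟩ | ⟨h1, h2⟩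
    · exact ⟨k, hk, h1, h2⟩
    · exact ⟨k * w, mul_mem hk hwG,
        by rw [Equiv.Perm.mul_apply, hwc, h2],
        by rw [Equiv.Perm.mul_apply, hwd, h1]⟩
  -- out- and in-neighbourhoods
  set O : V → Finset V := fun u => Finset.univ.filter (fun y => D u y) with hO
  set I : V → Finset V := fun u => Finset.univ.filter (fun y => D y u) with hI
  have hOmem : ∀ u y, y ∈ O u ↔ D u y := by
    intro u y; rw [hO]; simp
  have hImem : ∀ u y, y ∈ I u ↔ D y u := by
    intro u y; rw [hI]; simp
  have hOI : ∀ u, (O u).card + (I u).card = 4 := by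
    intro u
    have hunion : O u ∪ I u = Γ.neighborFinset u := by
      ext y
      simp only [Finset.mem_union, hOmem, hImem, SimpleGraph.mem_neighborFinset]
      constructor
      · rintro (h | h)
        · exact hD_adj u y h
        · exact (hD_adj y u h).symm
      · exact hD_total u y
    have hdisj : O u ∩ I u = ∅ := by
      ext y
      simp only [Finset.mem_inter, hOmem, hImem, Finset.notMem_empty, iff_false, not_and]
      exact hD_anti u y
    have hcui := Finset.card_union_add_card_inter (O u) (I u)
    rw [hunion, hdisj, Finset.card_empty, SimpleGraph.card_neighborFinset_eq_degree, hval] at hcui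
    omega
  have hconst : ∀ u w : V, (O u).card = (O w).card ∧ (I u).card = (I w).card := by
    intro u w
    obtain ⟨g, hg, hguw⟩ := hVT u w
    constructor
    · apply Finset.card_bij (fun y _ => g y)
      · intro y hy
        rw [hOmem] at hy ⊢
        rw [← hguw]
        exact hD_inv g hg u y hy
      · intro y1 _ y2 _ hyy
        exact g.injective hyy
      · intro y hy
        rw [hOmem] at hy
        refine ⟨g⁻¹ y, ?_, by rw [← Equiv.Perm.inv_eq_iff_eq.mp rfl]⟩
        rw [hOmem]
        have h2 := hD_inv g⁻¹ (inv_mem hg) w y hy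
        rwa [show g⁻¹ w = u by rw [← hguw, Equiv.Perm.inv_eq_iff_eq.mpr rfl]] at h2
    · apply Finset.card_bij (fun y _ => g y)
      · intro y hy
        rw [hImem] at hy ⊢
        rw [← hguw]
        exact hD_inv g hg y u hy
      · intro y1 _ y2 _ hyy
        exact g.injective hyy
      · intro y hy
        rw [hImem] at hy
        refine ⟨g⁻¹ y, ?_, by rw [← Equiv.Perm.inv_eq_iff_eq.mp rfl]⟩
        rw [hImem]
        have h2 := hD_inv g⁻¹ (inv_mem hg) y w hy
        rwa [show g⁻¹ w = u by rw [← hguw, Equiv.Perm.inv_eq_iff_eq.mpr rfl]] at h2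
  have hsum : ∑ u : V, (O u).card = ∑ u : V, (I u).card := by
    rw [hO, hI]
    simp only [Finset.card_filter]
    exact Finset.sum_comm
  have hk2 : (O v).card = 2 := by
    have h1 : ∑ u : V, (O u).card = Fintype.card V * (O v).card := by
      rw [Finset.sum_congr rfl (fun u _ => (hconst u v).1), Finset.sum_const,
        Finset.card_univ, smul_eq_mul]
    have h2 : ∑ u : V, (I u).card = Fintype.card V * (I v).card := by
      rw [Finset.sum_congr rfl (fun u _ => (hconst u v).2), Finset.sum_const,
        Finset.card_univ, smul_eq_mul]
    have hcardpos : 0 < Fintype.card V := Fintype.card_pos_iff.mpr ⟨v⟩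
    have h4 := hOI v
    rw [h1, h2] at hsum
    have h5 : (O v).card = (I v).card := Nat.eq_of_mul_eq_mul_left hcardpos hsum
    omega
  have hI2 : (I v).card = 2 := by have := hOI v; omega
  -- odd-order elements of the stabilizer are trivial
  have key : ∀ h : Equiv.Perm V, h ∈ G → Odd (orderOf h) → h v = v → h = 1 := by
    intro h hhG hodd hv
    obtain ⟨m, hm⟩ := hodd
    have hpowfix : ∀ w : V, h (h w) = w → h w = w := by
      intro w h2
      have hfix : ∀ n : ℕ, ((h * h) ^ n) w = w := by
        intro n
        induction n with
        | zero => simp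
        | succ n ih =>
          rw [pow_succ, Equiv.Perm.mul_apply, Equiv.Perm.mul_apply, h2]
          exact ih
      have he : h w = (h ^ (2 * m + 2)) w := by
        rw [show 2 * m + 2 = orderOf h + 1 by omega, pow_succ, pow_orderOf_eq_one, one_mul]
      rw [he, show 2 * m + 2 = 2 * (m + 1) by ring, pow_mul, pow_two]
      exact hfix (m + 1)
    have step : ∀ x w : V, h x = x → Γ.Adj x w → h w = w := by
      intro x w hx hxw
      apply hpowfix
      by_cases hww : h w = w
      · rw [hww, hww]
      rcases hD_total x w hxw with hD | hD
      · have m1 : w ∈ O x := (hOmem x w).mpr hD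
        have m2 : h w ∈ O x := by
          rw [hOmem]
          have h3 := hD_inv h hhG x w hD
          rwa [hx] at h3
        have m3 : h (h w) ∈ O x := by
          rw [hOmem]
          have h3 := hD_inv h hhG x (h w) ((hOmem x (h w)).mp m2)
          rwa [hx] at h3
        have hc2 : (O x).card = 2 := (hconst x v).1.trans hk2
        obtain ⟨p, q, hpq, hOx⟩ := Finset.card_eq_two.mp hc2
        rw [hOx, Finset.mem_insert, Finset.mem_singleton] at m1 m2 m3
        have hcase : h (h w) = w ∨ h (h w) = h w := by
          rcases m1 with rfl | rfl
          · rcases m2 with h2 | h2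
            · exact absurd h2 hww
            · subst h2; tauto
          · rcases m2 with h2 | h2
            · subst h2; tauto
            · exact absurd h2 hww
        rcases hcase with hc | hc
        · exact hc
        · exact absurd (h.injective hc) hww
      · have m1 : w ∈ I x := (hImem x w).mpr hD
        have m2 : h w ∈ I x := by
          rw [hImem]
          have h3 := hD_inv h hhG w x hD
          rwa [hx] at h3
        have m3 : h (h w) ∈ I x := by
          rw [hImem]
          have h3 := hD_inv h hhG (h w) x ((hImem x (h w)).mp m2)
          rwa [hx] at h3
        have hc2 : (I x).card = 2 := (hconst x v).2.trans hI2
        obtain ⟨p, q, hpq, hIx⟩ := Finset.card_eq_two.mp hc2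
        rw [hIx, Finset.mem_insert, Finset.mem_singleton] at m1 m2 m3
        have hcase : h (h w) = w ∨ h (h w) = h w := by
          rcases m1 with rfl | rfl
          · rcases m2 with h2 | h2
            · exact absurd h2 hww
            · subst h2; tauto
          · rcases m2 with h2 | h2
            · subst h2; tauto
            · exact absurd h2 hww
        rcases hcase with hc | hc
        · exact hc
        · exact absurd (h.injective hc) hww
    have fixall : ∀ x y : V, Γ.Walk x y → h x = x → h y = y := by
      intro x y p
      induction p with
      | nil => exact id
      | cons hadj _ ih => intro hx; exact ih (step _ _ hx hadj)
    ext u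
    obtain ⟨p⟩ := hconn.preconnected v u
    rw [Equiv.Perm.one_apply]
    exact fixall v u p hv
  -- conclude: every element has 2-power order
  intro g
  obtain ⟨hgG, hgs⟩ := Subgroup.mem_inf.mp g.2
  have hgv : (g : Equiv.Perm V) v = v := by
    have h5 := MulAction.mem_stabilizer_iff.mp hgs
    simpa [Equiv.Perm.smul_def] using h5
  set n := orderOf (g : Equiv.Perm V) with hn
  have hnpos : 0 < n := orderOf_pos _
  refine ⟨n.factorization 2, ?_⟩
  have hdvd : 2 ^ (n.factorization 2) ∣ n := Nat.ordProj_dvd n 2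
  have hordpow : orderOf ((g : Equiv.Perm V) ^ 2 ^ (n.factorization 2))
      = n / 2 ^ (n.factorization 2) := by
    rw [orderOf_pow' _ (by positivity), ← hn, Nat.gcd_eq_right hdvd]
  have hodd : Odd (orderOf ((g : Equiv.Perm V) ^ 2 ^ (n.factorization 2))) := by
    rw [hordpow]
    have h2 : ¬ (2 ∣ n / 2 ^ (n.factorization 2)) :=
      Nat.not_dvd_ordCompl Nat.prime_two (by omega)
    rw [Nat.odd_iff]
    omega
  have hfixpow : ∀ k : ℕ, ((g : Equiv.Perm V) ^ k) v = v := by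
    intro k
    induction k with
    | zero => simp
    | succ k ih => rw [pow_succ, Equiv.Perm.mul_apply, hgv]; exact ih
  have h1 : ((g : Equiv.Perm V) ^ 2 ^ (n.factorization 2)) = 1 :=
    key _ (pow_mem hgG _) hodd (hfixpow _)
  rw [← OneMemClass.coe_eq_one]
  push_cast
  exact h1
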